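/- Let G₀ = (V, E₀) be a finite simple graph with expansion φ(G₀) ≥ α for some α > 0, let T > 0, and let G = (V, E) be obtained from G₀ by deleting at most T edges, i.e. E ⊆ E₀ and |E₀∖E| ≤ T. Then every nonempty S ⊆ V with |S| ≤ |V∖S| and δ_G(S) > √(T/α) satisfies φ_G(S) ≥ min{ α/2, 1/(2√(T/α)) }. -/
import Mathlib


/-- Edges of `G` with one endpoint in `S` and the other endpoint in `U \ S`:
the cut edges `∂(S)` of `S`, inside the subgraph of `G` induced by `U` (when `S ⊆ U`). -/
def cutEdgesIn {V : Type*} (G : SimpleGraph V) (U S : Set V) : Set (Sym2 V) :=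
  {e | e ∈ G.edgeSet ∧ ∃ u v, e = s(u, v) ∧ u ∈ S ∧ v ∈ U ∧ v ∉ S}

/-- `δ(S)`, the number of cut edges of `S` inside the subgraph induced by `U`. -/
noncomputable def deltaIn {V : Type*} (G : SimpleGraph V) (U S : Set V) : ℕ :=
  (cutEdgesIn G U S).ncard

/-- The expansion `φ(S)` of the cut `S` inside the subgraph of `G` induced by `U`. -/
noncomputable def phiIn {V : Type*} (G : SimpleGraph V) (U S : Set V) : ℝ :=
  (deltaIn G U S : ℝ) / min (S.ncard : ℝ) ((U \ S).ncard : ℝ)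

/-- Let `G₀` have expansion `φ(G₀) ≥ α > 0`, let `T > 0`, and let `G` be
obtained from `G₀` by deleting at most `T` edges. Then every nonempty `S` with `|S| ≤ |V ∖ S|`
and `δ_G(S) > √(T/α)` satisfies `φ_G(S) ≥ min (α/2) (1/(2√(T/α)))`. -/
theorem stmt15 {V : Type*} [Fintype V] (G0 : SimpleGraph V) (α : ℝ) (hα : 0 < α)
    (hexp : ∀ S : Set V, S.Nonempty → S ≠ Set.univ → α ≤ phiIn G0 Set.univ S)
    (T : ℝ) (hT : 0 < T) (G : SimpleGraph V)
    (hsub : G.edgeSet ⊆ G0.edgeSet)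
    (hdel : ((G0.edgeSet \ G.edgeSet).ncard : ℝ) ≤ T)
    (S : Set V) (hSne : S.Nonempty) (hSsize : S.ncard ≤ Sᶜ.ncard)
    (hScut : Real.sqrt (T / α) < (deltaIn G Set.univ S : ℝ)) :
    min (α / 2) (1 / (2 * Real.sqrt (T / α))) ≤ phiIn G Set.univ S := by

  classical
  set s := Real.sqrt (T / α) with hs
  have hs0 : 0 < s := Real.sqrt_pos.mpr (div_pos hT hα)
  have hScard : 0 < (S.ncard : ℝ) := by
    exact_mod_cast (Set.ncard_pos (Set.toFinite S)).mpr hSne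
  have hSuniv : S ≠ Set.univ := by
    intro h
    have hc : Sᶜ = (∅ : Set V) := by simp [h]
    rw [hc] at hSsize
    simp [Set.ncard_empty] at hSsize
    have := (Set.ncard_pos (Set.toFinite S)).mpr hSne
    omega
  have hdiff : Set.univ \ S = Sᶜ := by ext x; simp
  have hsubcut : cutEdgesIn G0 Set.univ S ⊆
      cutEdgesIn G Set.univ S ∪ (G0.edgeSet \ G.edgeSet) := by
    rintro e ⟨he, u, v, rfl, hu, _, hv⟩
    by_cases h : s(u, v) ∈ G.edgeSet
    · exact Or.inl ⟨h, u, v, rfl, hu, trivial, hv⟩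
    · exact Or.inr ⟨he, h⟩
  have hd0 : (deltaIn G0 Set.univ S : ℝ) ≤ (deltaIn G Set.univ S : ℝ) + T := by
    have h1 := Set.ncard_le_ncard hsubcut (Set.toFinite _)
    have h2 := Set.ncard_union_le (cutEdgesIn G Set.univ S) (G0.edgeSet \ G.edgeSet)
    have h3 : (cutEdgesIn G0 Set.univ S).ncard ≤
        (cutEdgesIn G Set.univ S).ncard + (G0.edgeSet \ G.edgeSet).ncard :=
      le_trans h1 h2
    unfold deltaIn
    push_cast
    have h4 : ((cutEdgesIn G0 Set.univ S).ncard : ℝ) ≤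
        ((cutEdgesIn G Set.univ S).ncard : ℝ) + ((G0.edgeSet \ G.edgeSet).ncard : ℝ) := by
      exact_mod_cast h3
    linarith
  have hphi0 := hexp S hSne hSuniv
  have hminS : min ((S.ncard : ℝ)) (((Set.univ \ S).ncard : ℝ)) = (S.ncard : ℝ) := by
    rw [hdiff]; exact min_eq_left (by exact_mod_cast hSsize)
  have hα1 : α * S.ncard ≤ (deltaIn G0 Set.univ S : ℝ) := by
    unfold phiIn at hphi0
    rw [hminS, le_div_iff₀ hScard] at hphi0
    linarith
  have key : α * S.ncard ≤ (deltaIn G Set.univ S : ℝ) + T := le_trans hα1 hd0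
  unfold phiIn
  rw [hminS]
  set d := (deltaIn G Set.univ S : ℝ) with hd
  by_cases hc : α / 2 ≤ d / S.ncard
  · exact le_trans (min_le_left _ _) hc
  · refine le_trans (min_le_right _ _) ?_
    push_neg at hc
    have h1 : d < α / 2 * S.ncard := by
      rw [div_lt_iff₀ hScard] at hc; linarith
    have hSle : (S.ncard : ℝ) ≤ 2 * T / α := by
      rw [le_div_iff₀ hα]; nlinarith
    rw [div_le_div_iff₀ (by positivity) hScard]
    have hds : s < d := hScut
    have hss : s * s = T / α := Real.mul_self_sqrt (le_of_lt (div_pos hT hα))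
    have hS2 : (S.ncard : ℝ) ≤ 2 * (s * s) := by
      rw [hss, ← mul_div_assoc]; exact hSle
    nlinarith [mul_pos hs0 (sub_pos.mpr hds), hS2]
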